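/- Let H be a group. Call a group G H-null if every group homomorphism H → G is trivial. Suppose the full subcategory of H-null groups is reflective in the category of groups, with reflector P_H and unit maps η_G : G → P_H(G) (so each P_H(G) is H-null and every homomorphism from G to an H-null group factors uniquely through η_G). Then P_H is conditionally flat: if a group extension 1 → K → E → Q → 1 is P_H-flat (i.e., applying P_H to the kernel inclusion and to the projection yields a group extension 1 → P_H(K) → P_H(E) → P_H(Q) → 1), then for every group homomorphism f : X → Q, the pullback extension 1 → K' → P → X → 1, where P = {(e,x) ∈ E × X : p(e) = f(x)} with projection to X and kernel K' = {(k,1) : k ∈ K}, is also P_H-flat. -/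

import Mathlib

open CategoryTheory

universe u

/-- The pullback (fiber product) of two homomorphisms `p : E →* Q` and `f : X →* Q`,
as a subgroup of `E × X`. -/
def pullbackSubgroup {E X Q : Type*} [Group E] [Group X] [Group Q]
    (p : E →* Q) (f : X →* Q) : Subgroup (E × X) where
  carrier := {q : E × X | p q.1 = f q.2}
  one_mem' := by simp
  mul_mem' := by
    intro a b ha hb
    simp only [Set.mem_setOf_eq, Prod.fst_mul, Prod.snd_mul, map_mul] at *
    rw [ha, hb]
  inv_mem' := by
    intro a ha
    simp only [Set.mem_setOf_eq, Prod.fst_inv, Prod.snd_inv, map_inv] at *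
    rw [ha]

/-- The projection from the pullback of `p : E →* Q` along `f : X →* Q` to `X`. -/
def pullbackProj {E X Q : Type*} [Group E] [Group X] [Group Q]
    (p : E →* Q) (f : X →* Q) : ↥(pullbackSubgroup p f) →* X :=
  (MonoidHom.snd E X).comp (pullbackSubgroup p f).subtype

/-- The inclusion of the kernel of a morphism of groups, as a morphism in `Grp`. -/
def kerIncl {E Q : GrpCat.{u}} (p : E ⟶ Q) : GrpCat.of ↥(MonoidHom.ker p.hom) ⟶ E :=
  GrpCat.ofHom (MonoidHom.ker p.hom).subtype

/-- The projection of the pullback of `p : E ⟶ Q` along `f : X ⟶ Q`, as a morphism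
in `Grp`. -/
def pbHom {E X Q : GrpCat.{u}} (p : E ⟶ Q) (f : X ⟶ Q) :
    GrpCat.of ↥(pullbackSubgroup p.hom f.hom) ⟶ X :=
  GrpCat.ofHom (pullbackProj p.hom f.hom)

/-- A group `G` is `H`-null if every homomorphism `H →* G` is trivial. -/
def IsHNull (H : Type u) [Group H] (G : GrpCat.{u}) : Prop :=
  ∀ φ : H →* G, φ = 1

/-- An extension `1 → ker p → E → Q → 1` is `L`-flat for a functor `L : Grp ⥤ Grp` if
applying `L` to the kernel inclusion and to `p` yields again a group extension. -/
def GrpFlat (L : GrpCat.{u} ⥤ GrpCat.{u}) {E Q : GrpCat.{u}} (p : E ⟶ Q) : Prop :=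
  Function.Injective (L.map (kerIncl p)).hom ∧
  Function.Surjective (L.map p).hom ∧
  MonoidHom.range (L.map (kerIncl p)).hom = MonoidHom.ker (L.map p).hom

section Aux
variable {H : Type u} [Group H] {PH : GrpCat.{u} ⥤ GrpCat.{u}} (η : 𝟭 GrpCat.{u} ⟶ PH)

lemma nat_app {G G' : GrpCat.{u}} (φ : G ⟶ G') (x : G) :
    η.app G' (φ x) = PH.map φ (η.app G x) := by
  have h := η.naturality φ
  have := congrArg (fun (ψ : G ⟶ PH.obj G') => ψ x) h
  simpa using this

/-- nullness transfers along injections (no η needed) -/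
lemma null_of_inj {A B : Type u} [Group A] [Group B] (hB : ∀ ψ : H →* B, ψ = 1)
    (ω : A →* B) (hω : Function.Injective ω) : ∀ ψ : H →* A, ψ = 1 := by
  intro ψ
  ext h
  show ψ h = 1
  apply hω
  rw [map_one]
  have := congrArg (fun χ : H →* B => χ h) (hB (ω.comp ψ))
  simpa using this

lemma hom_one {A B : GrpCat.{u}} (φ : A ⟶ B) : φ (1 : ↥A) = 1 :=
  map_one (show ↥A →* ↥B from φ.hom)

lemma hom_mul {A B : GrpCat.{u}} (φ : A ⟶ B) (x y : ↥A) : φ (x * y) = φ x * φ y :=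
  map_mul (show ↥A →* ↥B from φ.hom) x y

lemma hom_inv {A B : GrpCat.{u}} (φ : A ⟶ B) (x : ↥A) : φ x⁻¹ = (φ x)⁻¹ :=
  map_inv (show ↥A →* ↥B from φ.hom) x

variable (hnull : ∀ G : GrpCat.{u}, IsHNull H (PH.obj G))
variable (huniv : ∀ (G D : GrpCat.{u}), IsHNull H D → ∀ g : G ⟶ D,
      ∃! h : PH.obj G ⟶ D, η.app G ≫ h = g)

include hnull huniv

/-- any hom to a null group kills the kernel of the unit -/
lemma L2m {G : GrpCat.{u}} {D : Type u} [Group D] (hD : ∀ ψ : H →* D, ψ = 1)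
    (φ : ↥G →* D) (x : ↥G) (hx : η.app G x = 1) : φ x = 1 := by
  obtain ⟨h, hh, -⟩ := huniv G (GrpCat.of D) (fun ψ => hD ψ) (GrpCat.ofHom φ : G ⟶ GrpCat.of D)
  have h1 := congrArg (fun (ψ : G ⟶ GrpCat.of D) => ψ x) hh
  calc φ x = h (η.app G x) := h1.symm
    _ = h 1 := by rw [hx]
    _ = 1 := map_one (show ↥(PH.obj G) →* D from h.hom)

lemma eta_surj (G : GrpCat.{u}) : Function.Surjective (η.app G) := by
  set R := MonoidHom.range (η.app G).hom with hR
  have hRnull : ∀ ψ : H →* ↥R, ψ = 1 :=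
    null_of_inj (hnull G) R.subtype Subtype.val_injective
  obtain ⟨h, hh, -⟩ := huniv G (GrpCat.of ↥R) (fun ψ => hRnull ψ)
    (GrpCat.ofHom (η.app G).hom.rangeRestrict : G ⟶ GrpCat.of ↥R)
  obtain ⟨h', -, hu⟩ := huniv G (PH.obj G) (hnull G) (η.app G)
  have h1 : (h ≫ (GrpCat.ofHom R.subtype : GrpCat.of ↥R ⟶ PH.obj G)) = h' := by
    apply hu
    show η.app G ≫ h ≫ GrpCat.ofHom R.subtype = η.app G
    rw [← Category.assoc, hh]
    ext x
    rfl
  have h2 : (𝟙 (PH.obj G) : PH.obj G ⟶ PH.obj G) = h' := by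
    apply hu
    simp
  have h3 : ∀ z : ↥(PH.obj G), R.subtype (h z) = z := by
    intro z
    have := congrArg (fun (ψ : PH.obj G ⟶ PH.obj G) => ψ z) (h1.trans h2.symm)
    simpa using this
  intro z
  obtain ⟨g, hg⟩ := (h z).2
  exact ⟨g, hg.trans (h3 z)⟩

/-- the kernel of the unit is "acyclic": all maps to null groups vanish -/
lemma acyc (G : GrpCat.{u}) {D : Type u} [Group D] (hD : ∀ ψ : H →* D, ψ = 1)
    (φ0 : ↥(MonoidHom.ker (η.app G).hom) →* D) (u0 : ↥(MonoidHom.ker (η.app G).hom)) : φ0 u0 = 1 := by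
  revert φ0 u0
  set NG := MonoidHom.ker (η.app G).hom with hNG
  set G2 : GrpCat.{u} := GrpCat.of ↥NG with hG2
  set N2 : Subgroup ↥NG := MonoidHom.ker (η.app G2).hom with hN2
  set N2' : Subgroup ↥G := Subgroup.map NG.subtype N2 with hN2'
  intro φ0 u0
  haveI hN2'n : N2'.Normal := by
    constructor
    intro n hn g
    obtain ⟨m, hm, rfl⟩ := hn
    have hconj : ∀ y : ↥NG, (MulAut.conj g).toMonoidHom ((NG.subtype) y) ∈ NG := by
      intro y
      exact Subgroup.Normal.conj_mem inferInstance _ y.2 g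
    set c : ↥NG →* ↥NG :=
      MonoidHom.codRestrict ((MulAut.conj g).toMonoidHom.comp NG.subtype) NG hconj with hc
    rw [hN2] at hm
    have hcm : η.app G2 (c m) = 1 :=
      L2m (G := G2) η hnull huniv (fun ψ => hnull G2 ψ) ((η.app G2).hom.comp c) m
        (MonoidHom.mem_ker.mp hm)
    exact ⟨c m, hcm, rfl⟩
  have hle : N2' ≤ NG := by
    rintro x ⟨m, -, rfl⟩
    exact m.2
  set q1 : (↥G ⧸ N2') →* (↥G ⧸ NG) :=
    QuotientGroup.map N2' NG (MonoidHom.id ↥G) (by simpa using hle) with hq1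
  -- θ' : ↥NG →* ker q1
  have hθmem : ∀ y : ↥NG, ((QuotientGroup.mk' N2').comp NG.subtype) y ∈ MonoidHom.ker q1 := by
    intro y
    show q1 (QuotientGroup.mk y.1) = 1
    rw [hq1, QuotientGroup.map_mk, QuotientGroup.eq_one_iff]
    simpa using y.2
  set θ' : ↥NG →* ↥(MonoidHom.ker q1) :=
    MonoidHom.codRestrict ((QuotientGroup.mk' N2').comp NG.subtype) (MonoidHom.ker q1) hθmem
    with hθ'
  have hθs : Function.Surjective θ' := by
    rintro ⟨z, hz⟩
    obtain ⟨g, rfl⟩ := QuotientGroup.mk_surjective z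
    have hg : g ∈ NG := by
      have h0 : q1 (QuotientGroup.mk g) = 1 := hz
      rw [hq1, QuotientGroup.map_mk, QuotientGroup.eq_one_iff] at h0
      simpa using h0
    exact ⟨⟨g, hg⟩, Subtype.ext rfl⟩
  have hkerθ : MonoidHom.ker θ' = N2 := by
    ext y
    constructor
    · intro hy
      have h0 : ((QuotientGroup.mk' N2') y.1) = 1 := congrArg Subtype.val
        (show θ' y = 1 from hy)
      rw [QuotientGroup.mk'_apply, QuotientGroup.eq_one_iff] at h0
      obtain ⟨m, hm, hmv⟩ := h0
      have : m = y := Subtype.ext hmv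
      rwa [this] at hm
    · intro hy
      apply Subtype.ext
      show ((QuotientGroup.mk' N2') y.1) = 1
      rw [QuotientGroup.mk'_apply, QuotientGroup.eq_one_iff]
      exact ⟨y, hy, rfl⟩
  have hkernull : ∀ ψ : H →* ↥(MonoidHom.ker q1), ψ = 1 := by
    have e1 := QuotientGroup.quotientKerEquivOfSurjective θ' hθs
    have e2 := QuotientGroup.quotientMulEquivOfEq hkerθ
    have e3 : (↥NG ⧸ N2) = (↥NG ⧸ MonoidHom.ker (η.app G2).hom) := by rw [hN2]
    refine null_of_inj (fun ψ => hnull G2 ψ)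
      ((QuotientGroup.kerLift (η.app G2).hom).comp
        (e2.toMonoidHom.comp e1.symm.toMonoidHom)) ?_
    simp only [MonoidHom.coe_comp, MulEquiv.coe_toMonoidHom]
    exact (QuotientGroup.kerLift_injective _).comp (e2.injective.comp e1.symm.injective)
  have hqnull : ∀ ψ : H →* (↥G ⧸ N2'), ψ = 1 := by
    intro ψ
    have hmem : ∀ h, ψ h ∈ MonoidHom.ker q1 := by
      intro h
      have h1 : q1.comp ψ = 1 := by
        exact null_of_inj (fun χ => hnull G χ) (QuotientGroup.kerLift (η.app G).hom)
          (QuotientGroup.kerLift_injective _) (q1.comp ψ)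
      have := congrArg (fun χ : H →* (↥G ⧸ NG) => χ h) h1
      simpa [MonoidHom.mem_ker] using this
    set ψ2 := MonoidHom.codRestrict ψ (MonoidHom.ker q1) hmem with hψ2
    have hψ21 : ψ2 = 1 := hkernull ψ2
    ext h
    show ψ h = 1
    have h2 : ψ2 h = 1 := by rw [hψ21]; rfl
    have h3 : (↑(ψ2 h) : ↥G ⧸ N2') = ψ h := rfl
    have := congrArg Subtype.val h2
    rw [h3] at this
    simpa using this
  have hNGle : ∀ x : ↥G, x ∈ NG → x ∈ N2' := by
    intro x hx
    have h1 : (QuotientGroup.mk' N2') x = 1 :=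
      L2m η hnull huniv hqnull (QuotientGroup.mk' N2') x hx
    rwa [QuotientGroup.mk'_apply, QuotientGroup.eq_one_iff] at h1
  obtain ⟨m, hm, hmv⟩ := hNGle u0.1 u0.2
  have hmu : m = u0 := Subtype.ext hmv
  rw [hmu, hN2] at hm
  exact L2m (G := G2) η hnull huniv hD φ0 u0 (MonoidHom.mem_ker.mp hm)

end Aux

/-- Nullification functors in the category of groups are conditionally flat: if `P_H` is
a reflector onto the full subcategory of `H`-null groups, with unit `η`, then any pullback
of a `P_H`-flat group extension is again `P_H`-flat. -/
theorem nullification_conditionally_flat (H : Type u) [Group H]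
    (PH : GrpCat.{u} ⥤ GrpCat.{u}) (η : 𝟭 GrpCat.{u} ⟶ PH)
    (hnull : ∀ G : GrpCat.{u}, IsHNull H (PH.obj G))
    (huniv : ∀ (G D : GrpCat.{u}), IsHNull H D → ∀ g : G ⟶ D,
      ∃! h : PH.obj G ⟶ D, η.app G ≫ h = g)
    {E Q : GrpCat.{u}} (p : E ⟶ Q) (hp : Function.Surjective p.hom) (hflat : GrpFlat PH p)
    {X : GrpCat.{u}} (f : X ⟶ Q) :
    GrpFlat PH (pbHom p f) := by
  obtain ⟨hfinj, hfsurj, hfex⟩ := hflat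
  have hNQ : ∀ q : ↥Q, η.app Q q = 1 → ∃ m : ↥E, η.app E m = 1 ∧ p m = q := by
    intro q hq
    obtain ⟨e, rfl⟩ := hp q
    have h1 : PH.map p (η.app E e) = 1 := by rw [← nat_app η p e]; exact hq
    have h2 : η.app E e ∈ MonoidHom.range (PH.map (kerIncl p)).hom := by
      rw [hfex]; exact h1
    obtain ⟨z, hz⟩ := h2
    obtain ⟨k, rfl⟩ := eta_surj η hnull huniv (GrpCat.of ↥(MonoidHom.ker p.hom)) z
    have h3 : η.app E (kerIncl p k) = η.app E e := by
      have h4 := nat_app η (kerIncl p) k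
      rw [hz] at h4
      exact h4
    refine ⟨(kerIncl p k)⁻¹ * e, ?_, ?_⟩
    · rw [hom_mul (η.app E), hom_inv (η.app E), h3]
      simp
    · rw [hom_mul p, hom_inv p]
      have h5 : p (kerIncl p k) = 1 := k.2
      rw [h5]
      simp
  have hinj' : ∀ (k : ↥E) (hk : k ∈ MonoidHom.ker p.hom), η.app E k = 1 →
      η.app (GrpCat.of ↥(MonoidHom.ker p.hom)) ⟨k, hk⟩ = 1 := by
    intro k hk hk1
    apply hfinj
    have hone : PH.map (kerIncl p) (1 : ↥(PH.obj (GrpCat.of ↥(MonoidHom.ker p.hom)))) = 1 :=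
      hom_one (PH.map (kerIncl p))
    rw [hone, ← nat_app η (kerIncl p) ⟨k, hk⟩]
    exact hk1
  -- the hard lemma
  have HL : ∀ w : ↥(pullbackSubgroup p.hom f.hom), η.app E (w : ↥E × ↥X).1 = 1 →
      η.app X (w : ↥E × ↥X).2 = 1 → η.app (GrpCat.of ↥(pullbackSubgroup p.hom f.hom)) w = 1 := by
    intro w hw1 hw2
    set M' : Subgroup ↥(pullbackSubgroup p.hom f.hom) :=
      Subgroup.comap (pullbackSubgroup p.hom f.hom).subtype
        ((MonoidHom.ker (η.app E).hom).prod (MonoidHom.ker (η.app X).hom)) with hM'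
    have hwM : w ∈ M' := ⟨hw1, hw2⟩
    have hρmem : ∀ u : ↥M',
        ((MonoidHom.snd ↥E ↥X).comp
          ((pullbackSubgroup p.hom f.hom).subtype.comp M'.subtype)) u ∈ MonoidHom.ker (η.app X).hom :=
      fun u => u.2.2
    set ρ : ↥M' →* ↥(MonoidHom.ker (η.app X).hom) :=
      MonoidHom.codRestrict _ (MonoidHom.ker (η.app X).hom) hρmem with hρ
    have hρs : Function.Surjective ρ := by
      rintro ⟨y, hy⟩
      have hy1 : η.app X y = 1 := hy
      have hfy : η.app Q (f y) = 1 := by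
        rw [nat_app η f y, hy1]
        exact hom_one (PH.map f)
      obtain ⟨m, hm1, hm2⟩ := hNQ (f y) hfy
      exact ⟨⟨⟨(m, y), hm2⟩, ⟨hm1, hy1⟩⟩, Subtype.ext rfl⟩
    have hψker : ∀ u : ↥M', u ∈ MonoidHom.ker ρ →
        η.app (GrpCat.of ↥(pullbackSubgroup p.hom f.hom)) (u : ↥(pullbackSubgroup p.hom f.hom)) = 1 := by
      intro u hu
      have h2 : ((u : ↥(pullbackSubgroup p.hom f.hom)) : ↥E × ↥X).2 = 1 :=
        congrArg Subtype.val (show ρ u = 1 from hu)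
      have hcond : p ((u : ↥(pullbackSubgroup p.hom f.hom)) : ↥E × ↥X).1
          = f ((u : ↥(pullbackSubgroup p.hom f.hom)) : ↥E × ↥X).2 := (u : ↥(pullbackSubgroup p.hom f.hom)).2
      have hk : ((u : ↥(pullbackSubgroup p.hom f.hom)) : ↥E × ↥X).1 ∈ MonoidHom.ker p.hom := by
        rw [h2] at hcond
        rw [MonoidHom.mem_ker, hcond]
        exact hom_one f
      have hk1 : η.app E ((u : ↥(pullbackSubgroup p.hom f.hom)) : ↥E × ↥X).1 = 1 := u.2.1
      have hkK := hinj' _ hk hk1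
      have hjmem : ∀ k : ↥(MonoidHom.ker p.hom),
          ((MonoidHom.ker p.hom).subtype.prod 1) k ∈ pullbackSubgroup p.hom f.hom := by
        intro k
        show p (kerIncl p k) = f 1
        rw [hom_one f]
        exact k.2
      set j : GrpCat.of ↥(MonoidHom.ker p.hom) ⟶ GrpCat.of ↥(pullbackSubgroup p.hom f.hom) :=
        GrpCat.ofHom (MonoidHom.codRestrict ((MonoidHom.ker p.hom).subtype.prod 1) (pullbackSubgroup p.hom f.hom)
          hjmem) with hj
      have hj1 : η.app (GrpCat.of ↥(pullbackSubgroup p.hom f.hom))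
          (j ⟨((u : ↥(pullbackSubgroup p.hom f.hom)) : ↥E × ↥X).1, hk⟩) = 1 := by
        rw [nat_app η j _, hkK]
        exact hom_one (PH.map j)
      have hjval : j ⟨((u : ↥(pullbackSubgroup p.hom f.hom)) : ↥E × ↥X).1, hk⟩
          = (u : ↥(pullbackSubgroup p.hom f.hom)) := by
        apply Subtype.ext
        exact Prod.ext_iff.mpr ⟨rfl, h2.symm⟩
      rw [← hjval]
      exact hj1
    have hρker_le : MonoidHom.ker ρ ≤
        MonoidHom.ker ((η.app (GrpCat.of ↥(pullbackSubgroup p.hom f.hom))).hom.comp M'.subtype) :=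
      fun u hu => hψker u hu
    set ψhat := QuotientGroup.lift (MonoidHom.ker ρ)
      ((η.app (GrpCat.of ↥(pullbackSubgroup p.hom f.hom))).hom.comp M'.subtype) hρker_le with hψhat
    set eq1 := QuotientGroup.quotientKerEquivOfSurjective ρ hρs with heq1
    have hχ := acyc η hnull huniv X
      (fun χ => hnull (GrpCat.of ↥(pullbackSubgroup p.hom f.hom)) χ)
      (ψhat.comp eq1.symm.toMonoidHom)
    have h5 := hχ (eq1 (QuotientGroup.mk (⟨w, hwM⟩ : ↥M')))
    rw [MonoidHom.comp_apply] at h5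
    rw [MulEquiv.coe_toMonoidHom, MulEquiv.symm_apply_apply] at h5
    exact h5
  refine ⟨?_, ?_, ?_⟩
  · -- injectivity on kernels
    intro a b hab
    have key : ∀ z : ↥(PH.obj (GrpCat.of ↥(MonoidHom.ker (pbHom p f).hom))),
        PH.map (kerIncl (pbHom p f)) z = 1 → z = 1 := by
      intro z hz
      obtain ⟨u, rfl⟩ := eta_surj η hnull huniv (GrpCat.of ↥(MonoidHom.ker (pbHom p f).hom)) z
      have hval : η.app (GrpCat.of ↥(pullbackSubgroup p.hom f.hom)) (kerIncl (pbHom p f) u) = 1 := by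
        have h6 := nat_app η (kerIncl (pbHom p f)) u
        rw [hz] at h6
        exact h6
      have h2 : (u.1.1 : ↥E × ↥X).2 = 1 := u.2
      have hcond : p (u.1.1 : ↥E × ↥X).1 = f (u.1.1 : ↥E × ↥X).2 := u.1.2
      have hk : (u.1.1 : ↥E × ↥X).1 ∈ MonoidHom.ker p.hom := by
        rw [h2] at hcond
        rw [MonoidHom.mem_ker, hcond]
        exact hom_one f
      have hk1 : η.app E (u.1.1 : ↥E × ↥X).1 = 1 := by
        have h7 := nat_app η
          (GrpCat.ofHom ((MonoidHom.fst ↥E ↥X).comp (pullbackSubgroup p.hom f.hom).subtype) :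
            GrpCat.of ↥(pullbackSubgroup p.hom f.hom) ⟶ E) (kerIncl (pbHom p f) u)
        rw [hval] at h7
        exact h7.trans (hom_one (PH.map (GrpCat.ofHom ((MonoidHom.fst ↥E ↥X).comp
          (pullbackSubgroup p.hom f.hom).subtype) : GrpCat.of ↥(pullbackSubgroup p.hom f.hom) ⟶ E)))
      have hkK := hinj' _ hk hk1
      have hj2mem1 : ∀ k : ↥(MonoidHom.ker p.hom),
          ((MonoidHom.ker p.hom).subtype.prod 1) k ∈ pullbackSubgroup p.hom f.hom := by
        intro k
        show p (kerIncl p k) = f 1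
        rw [hom_one f]
        exact k.2
      have hj2mem2 : ∀ k : ↥(MonoidHom.ker p.hom),
          (MonoidHom.codRestrict ((MonoidHom.ker p.hom).subtype.prod 1) (pullbackSubgroup p.hom f.hom)
            hj2mem1) k ∈ MonoidHom.ker (pbHom p f).hom := fun k => rfl
      set j2 : GrpCat.of ↥(MonoidHom.ker p.hom) ⟶ GrpCat.of ↥(MonoidHom.ker (pbHom p f).hom) :=
        GrpCat.ofHom (MonoidHom.codRestrict
          (MonoidHom.codRestrict ((MonoidHom.ker p.hom).subtype.prod 1) (pullbackSubgroup p.hom f.hom)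
            hj2mem1) (MonoidHom.ker (pbHom p f).hom) hj2mem2) with hj2
      have hj21 : η.app (GrpCat.of ↥(MonoidHom.ker (pbHom p f).hom))
          (j2 ⟨(u.1.1 : ↥E × ↥X).1, hk⟩) = 1 := by
        rw [nat_app η j2 _, hkK]
        exact hom_one (PH.map j2)
      have hj2val : j2 ⟨(u.1.1 : ↥E × ↥X).1, hk⟩ = u := by
        apply Subtype.ext
        apply Subtype.ext
        exact Prod.ext_iff.mpr ⟨rfl, h2.symm⟩
      rw [← hj2val]
      exact hj21
    have h8 : PH.map (kerIncl (pbHom p f)) (a * b⁻¹) = 1 := by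
      rw [hom_mul (PH.map (kerIncl (pbHom p f))), hom_inv (PH.map (kerIncl (pbHom p f))), hab]
      simp
    have h9 := key _ h8
    have : a * b⁻¹ = 1 := h9
    group at this ⊢
    exact (mul_inv_eq_one.mp h9)
  · -- surjectivity
    intro z
    obtain ⟨x, rfl⟩ := eta_surj η hnull huniv X z
    obtain ⟨e0, he0⟩ := hp (f x)
    refine ⟨η.app (GrpCat.of ↥(pullbackSubgroup p.hom f.hom)) ⟨(e0, x), he0⟩, ?_⟩
    rw [← nat_app η (pbHom p f) ⟨(e0, x), he0⟩]
    rfl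
  · -- exactness
    ext z
    constructor
    · rintro ⟨y, rfl⟩
      obtain ⟨u, rfl⟩ := eta_surj η hnull huniv (GrpCat.of ↥(MonoidHom.ker (pbHom p f).hom)) y
      show PH.map (pbHom p f) (PH.map (kerIncl (pbHom p f)) _) = 1
      rw [← nat_app η (kerIncl (pbHom p f)) u]
      rw [← nat_app η (pbHom p f) (kerIncl (pbHom p f) u)]
      have h10 : (pbHom p f) (kerIncl (pbHom p f) u) = 1 := u.2
      rw [h10]
      exact hom_one (η.app X)
    · intro hz1
      obtain ⟨w0, rfl⟩ := eta_surj η hnull huniv (GrpCat.of ↥(pullbackSubgroup p.hom f.hom)) z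
      have main : ∀ w : ↥(pullbackSubgroup p.hom f.hom),
          PH.map (pbHom p f) (η.app (GrpCat.of ↥(pullbackSubgroup p.hom f.hom)) w) = 1 →
          η.app (GrpCat.of ↥(pullbackSubgroup p.hom f.hom)) w ∈
            MonoidHom.range (PH.map (kerIncl (pbHom p f))).hom := by
        intro w hz2
        have hx : η.app X ((w : ↥E × ↥X).2) = 1 := by
          have h11 := nat_app η (pbHom p f) w
          rw [hz2] at h11
          exact h11
        have hfx : η.app Q (f (w : ↥E × ↥X).2) = 1 := by
          rw [nat_app η f _, hx]
          exact hom_one (PH.map f)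
        obtain ⟨m, hm1, hm2⟩ := hNQ _ hfx
        have hv1 : η.app (GrpCat.of ↥(pullbackSubgroup p.hom f.hom))
            (⟨(m, (w : ↥E × ↥X).2), hm2⟩ : ↥(pullbackSubgroup p.hom f.hom)) = 1 :=
          HL ⟨(m, (w : ↥E × ↥X).2), hm2⟩ hm1 hx
        have hker : w * (⟨(m, (w : ↥E × ↥X).2), hm2⟩ : ↥(pullbackSubgroup p.hom f.hom))⁻¹
            ∈ MonoidHom.ker (pbHom p f).hom := by
          have h12 : (pbHom p f)
              (w * (⟨(m, (w : ↥E × ↥X).2), hm2⟩ : ↥(pullbackSubgroup p.hom f.hom))⁻¹)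
              = (w : ↥E × ↥X).2 * ((w : ↥E × ↥X).2)⁻¹ := rfl
          exact h12.trans (by simp)
        refine ⟨η.app (GrpCat.of ↥(MonoidHom.ker (pbHom p f).hom))
          ⟨w * (⟨(m, (w : ↥E × ↥X).2), hm2⟩ : ↥(pullbackSubgroup p.hom f.hom))⁻¹, hker⟩, ?_⟩
        rw [← nat_app η (kerIncl (pbHom p f)) _]
        have h13 : kerIncl (pbHom p f)
            (⟨w * (⟨(m, (w : ↥E × ↥X).2), hm2⟩ : ↥(pullbackSubgroup p.hom f.hom))⁻¹, hker⟩ :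
              ↥(MonoidHom.ker (pbHom p f).hom))
            = w * (⟨(m, (w : ↥E × ↥X).2), hm2⟩ : ↥(pullbackSubgroup p.hom f.hom))⁻¹ := rfl
        rw [h13, hom_mul (η.app (GrpCat.of ↥(pullbackSubgroup p.hom f.hom))),
          hom_inv (η.app (GrpCat.of ↥(pullbackSubgroup p.hom f.hom))), hv1]
        simp
      exact main w0 hz1
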